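/- Let H be a real vector space, a : H × H → ℝ a symmetric positive semidefinite bilinear form, ‖v‖_a := √(a(v,v)), ℓ : H → ℝ a linear functional, K_h ⊆ H, and let ȳ_h ∈ K_h satisfy the discrete variational inequality a(ȳ_h, y − ȳ_h) ≥ ℓ(y − ȳ_h) for all y ∈ K_h. Let ȳ ∈ H, h > 0, α ∈ ℝ, and C₁, C₂ ≥ 0, and suppose there exists y* ∈ K_h such that (i) ‖ȳ − y*‖_a ≤ C₁·h^α and (ii) a(ȳ, y* − ȳ_h) − ℓ(y* − ȳ_h) ≤ C₂·( h^{2α} + h^α·‖ȳ − ȳ_h‖_a ). Then ‖ȳ − ȳ_h‖_a ≤ (C₁ + C₂ + √C₂)·h^α. -/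

import Mathlib

/-- Cauchy–Schwarz for a symmetric positive semidefinite bilinear form. -/
lemma psd_cauchy_schwarz {H : Type*} [AddCommGroup H] [Module ℝ H]
    (a : H →ₗ[ℝ] H →ₗ[ℝ] ℝ)
    (hsym : ∀ v w : H, a v w = a w v)
    (hpsd : ∀ v : H, 0 ≤ a v v) (v w : H) :
    a v w ≤ Real.sqrt (a v v) * Real.sqrt (a w w) := by
  have key : ∀ t : ℝ, 0 ≤ a v v + 2 * t * a v w + t ^ 2 * a w w := by
    intro t
    have := hpsd (v + t • w)
    have h1 : a (v + t • w) (v + t • w)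
        = a v v + 2 * t * a v w + t ^ 2 * a w w := by
      simp [map_add, LinearMap.add_apply, LinearMap.map_smul, LinearMap.smul_apply,
        hsym w v]
      ring
    linarith [h1 ▸ this]
  rcases eq_or_lt_of_le (hpsd w) with hw | hw
  · have hvw : a v w = 0 := by
      by_contra hne
      have := key (-(a v v + 1) / (2 * a v w) * (a v w / |a v w|))
      -- simpler: pick t = -(a v v + 1)/(2 * a v w) if a v w ≠ 0? sign issues; do cases
      rcases lt_or_gt_of_ne hne with hneg | hpos
      · have := key (-(a v v + 1) / (2 * a v w))
        rw [← hw] at this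
        have h2 : 2 * (-(a v v + 1) / (2 * a v w)) * a v w = -(a v v + 1) := by
          field_simp
        nlinarith
      · have := key (-(a v v + 1) / (2 * a v w))
        rw [← hw] at this
        have h2 : 2 * (-(a v v + 1) / (2 * a v w)) * a v w = -(a v v + 1) := by
          field_simp
        nlinarith
    rw [hvw]
    positivity
  · have hsq : (a v w) ^ 2 ≤ a v v * a w w := by
      have := key (-(a v w) / a w w)
      have h2 : 2 * (-(a v w) / a w w) * a v w + ((-(a v w) / a w w)) ^ 2 * a w w
          = -((a v w) ^ 2 / a w w) := by
        field_simp
        ring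
      have h3 : (a v w) ^ 2 / a w w ≤ a v v := by linarith
      exact (div_le_iff₀ hw).mp h3
    calc a v w ≤ |a v w| := le_abs_self _
      _ = Real.sqrt ((a v w) ^ 2) := (Real.sqrt_sq_eq_abs _).symm
      _ ≤ Real.sqrt (a v v * a w w) := Real.sqrt_le_sqrt hsq
      _ = Real.sqrt (a v v) * Real.sqrt (a w w) := Real.sqrt_mul (hpsd v) _

/-- Abstract skeleton of the convergence theorem: if `ȳ_h ∈ K_h` solves the discrete
variational inequality, and there is `y* ∈ K_h` with `‖ȳ − y*‖_a ≤ C₁ h^α` and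
`a(ȳ, y* − ȳ_h) − ℓ(y* − ȳ_h) ≤ C₂ (h^{2α} + h^α ‖ȳ − ȳ_h‖_a)`, then
`‖ȳ − ȳ_h‖_a ≤ (C₁ + C₂ + √C₂) h^α`, where `‖v‖_a = √(a(v,v))`. -/
theorem abstract_convergence_estimate
    {H : Type*} [AddCommGroup H] [Module ℝ H]
    (a : H →ₗ[ℝ] H →ₗ[ℝ] ℝ)
    (hsym : ∀ v w : H, a v w = a w v)
    (hpsd : ∀ v : H, 0 ≤ a v v)
    (ℓ : H →ₗ[ℝ] ℝ)
    (Kh : Set H) (ybarh : H) (hybarh : ybarh ∈ Kh)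
    (hdvi : ∀ y ∈ Kh, ℓ (y - ybarh) ≤ a ybarh (y - ybarh))
    (ybar : H) (h α C₁ C₂ : ℝ) (hh : 0 < h) (hC₁ : 0 ≤ C₁) (hC₂ : 0 ≤ C₂)
    (hex : ∃ ystar ∈ Kh,
      Real.sqrt (a (ybar - ystar) (ybar - ystar)) ≤ C₁ * h ^ α ∧
      a ybar (ystar - ybarh) - ℓ (ystar - ybarh) ≤
        C₂ * (h ^ (2 * α) +
          h ^ α * Real.sqrt (a (ybar - ybarh) (ybar - ybarh)))) :
    Real.sqrt (a (ybar - ybarh) (ybar - ybarh)) ≤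
      (C₁ + C₂ + Real.sqrt C₂) * h ^ α := by
  obtain ⟨ys, hysK, hI, hII⟩ := hex
  set e := ybar - ybarh with he
  set N := Real.sqrt (a e e) with hN
  have hNnn : 0 ≤ N := Real.sqrt_nonneg _
  have hNsq : N ^ 2 = a e e := Real.sq_sqrt (hpsd e)
  have hha : 0 < h ^ α := Real.rpow_pos_of_pos hh α
  have hh2a : h ^ (2 * α) = h ^ α * h ^ α := by
    rw [two_mul, Real.rpow_add hh]
  -- decomposition
  have hdecomp : a e e =
      a e (ybar - ys) + (a ybar (ys - ybarh) - a ybarh (ys - ybarh)) := by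
    have h1 : a e (ybar - ys) + a e (ys - ybarh) = a e e := by
      rw [← map_add]
      congr 1
      exact sub_add_sub_cancel _ _ _
    have h2 : a e (ys - ybarh) = a ybar (ys - ybarh) - a ybarh (ys - ybarh) := by
      simp only [he, map_sub, LinearMap.sub_apply]
      ring
    linarith
  have hdvi' := hdvi ys hysK
  have hCS : a e (ybar - ys) ≤ N * (C₁ * h ^ α) := by
    calc a e (ybar - ys)
        ≤ Real.sqrt (a e e) * Real.sqrt (a (ybar - ys) (ybar - ys)) :=
          psd_cauchy_schwarz a hsym hpsd _ _
      _ ≤ N * (C₁ * h ^ α) := by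
          apply mul_le_mul_of_nonneg_left hI hNnn
  have hmain : N ^ 2 ≤ (C₁ + C₂) * h ^ α * N + C₂ * (h ^ α) ^ 2 := by
    have : a e e ≤ N * (C₁ * h ^ α) +
        C₂ * (h ^ (2 * α) + h ^ α * N) := by
      have : a ybar (ys - ybarh) - a ybarh (ys - ybarh) ≤
          C₂ * (h ^ (2 * α) + h ^ α * N) := le_trans (by linarith) hII
      linarith [hdecomp, hCS, this]
    rw [hNsq]
    rw [hh2a] at this
    nlinarith
  -- conclude: N ≤ (C₁ + C₂ + √C₂) h^α
  by_contra hcon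
  push_neg at hcon
  have hsC₂ : Real.sqrt C₂ * Real.sqrt C₂ = C₂ := Real.mul_self_sqrt hC₂
  have hB : 0 ≤ (C₁ + C₂) * h ^ α := by positivity
  have hD : Real.sqrt C₂ * h ^ α ≤ N := by
    nlinarith [Real.sqrt_nonneg C₂, hha.le]
  have hN0 : 0 < N := lt_of_le_of_lt (by positivity) hcon
  have hint1 := mul_lt_mul_of_pos_right hcon hN0
  have hint2 := mul_le_mul_of_nonneg_right hD (by positivity : 0 ≤ Real.sqrt C₂ * h ^ α)
  nlinarith [hint1, hint2, hsC₂]
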